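/- Let J be a 3×3 real positive definite matrix and F a 3×3 real positive definite matrix with Tr(J^{-1} F) = 1. Set H = F J^{-1} F. Then (Tr √(√(J^{-1}) H √(J^{-1})))² = Tr(H F^{-1}). -/

import Mathlib

open Matrix

open scoped Classical in
noncomputable def msqrt {d : ℕ} (A : Matrix (Fin d) (Fin d) ℝ) : Matrix (Fin d) (Fin d) ℝ :=
  if h : A.PosSemidef then
    (h.1.eigenvectorUnitary : Matrix (Fin d) (Fin d) ℝ) *
      diagonal ((↑) ∘ Real.sqrt ∘ h.1.eigenvalues) *
      (star h.1.eigenvectorUnitary : Matrix (Fin d) (Fin d) ℝ) else 0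

open scoped MatrixOrder in
lemma msqrt_eq_cfcSqrt {d : ℕ} {A : Matrix (Fin d) (Fin d) ℝ} (h : A.PosSemidef) :
    msqrt A = CFC.sqrt A := by
  rw [msqrt, dif_pos h, CFC.sqrt_eq_real_sqrt A h.nonneg, cfcₙ_eq_cfc, h.1.cfc_eq, IsHermitian.cfc,
    Unitary.conjStarAlgAut_apply]
  rfl

open scoped MatrixOrder in
lemma msqrt_psd' {d : ℕ} {A : Matrix (Fin d) (Fin d) ℝ} (h : A.PosSemidef) :
    (msqrt A).PosSemidef := by
  rw [msqrt_eq_cfcSqrt h]; exact (CFC.sqrt_nonneg A).posSemidef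

open scoped MatrixOrder in
lemma msqrt_mul_self' {d : ℕ} {A : Matrix (Fin d) (Fin d) ℝ} (h : A.PosSemidef) :
    msqrt A * msqrt A = A := by
  rw [msqrt_eq_cfcSqrt h]; exact CFC.sqrt_mul_sqrt_self A h.nonneg

open scoped MatrixOrder in
lemma eq_msqrt_of_sq_eq' {d : ℕ} {A B : Matrix (Fin d) (Fin d) ℝ} (hB : B.PosSemidef)
    (hA : A.PosSemidef) (hBA : B ^ 2 = A) : B = msqrt A := by
  rw [msqrt_eq_cfcSqrt hA, eq_comm, CFC.sqrt_eq_iff A B hA.nonneg hB.nonneg, ← sq, hBA]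

/-- If `J`, `F` are `3×3` real positive definite matrices with `Tr(J⁻¹ F) = 1`, and
`H = F J⁻¹ F`, then `(Tr √(√(J⁻¹) H √(J⁻¹)))² = Tr(H F⁻¹)`. -/
theorem stmt6 (J F : Matrix (Fin 3) (Fin 3) ℝ) (hJ : J.PosDef) (hF : F.PosDef)
    (htr : (J⁻¹ * F).trace = 1)
    (H : Matrix (Fin 3) (Fin 3) ℝ) (hH : H = F * J⁻¹ * F) :
    ((msqrt (msqrt J⁻¹ * H * msqrt J⁻¹)).trace) ^ 2 = (H * F⁻¹).trace := by
  have hJi : (J⁻¹).PosDef := hJ.inv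
  have hS : msqrt J⁻¹ = msqrt J⁻¹ := rfl
  set S := msqrt J⁻¹ with hSdef
  have hSpsd : S.PosSemidef := hS ▸ msqrt_psd' hJi.posSemidef
  have hSS : S * S = J⁻¹ := hS ▸ msqrt_mul_self' hJi.posSemidef
  have hSherm : Sᴴ = S := hSpsd.1
  -- M = S F S is psd and M^2 = S H S
  set M := S * F * S with hMdef
  have hMpsd : M.PosSemidef := by
    have := hF.posSemidef.mul_mul_conjTranspose_same S
    rwa [hSherm] at this
  have hMsq : M ^ 2 = S * H * S := by
    rw [pow_two, hH, hMdef]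
    calc S * F * S * (S * F * S) = S * F * (S * S) * F * S := by
          simp only [mul_assoc]
        _ = S * (F * J⁻¹ * F) * S := by rw [hSS]; simp only [mul_assoc]
  have hSHS : (S * H * S).PosSemidef := hMsq ▸ hMpsd.pow 2
  have hsqrtSHS : msqrt (S * H * S) = M := by
    exact (eq_msqrt_of_sq_eq' hMpsd hSHS hMsq).symm
  rw [hsqrtSHS]
  have hMtr : M.trace = 1 := by
    calc M.trace = (S * S * F).trace := by
          rw [hMdef, trace_mul_cycle]
        _ = 1 := by rw [hSS, htr]
  rw [hMtr]
  have hFinv : F * F⁻¹ = 1 := mul_nonsing_inv F (isUnit_iff_ne_zero.mpr hF.det_pos.ne')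
  rw [hH, mul_assoc, hFinv, mul_one, trace_mul_comm, htr]
  norm_num
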